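/- Let Γ be a homotopy link diagram (no loops, and every path between two distinct vertices lying on the same segment passes through a vertex on a different segment), and let e be a mixed edge, free edge, or arc of Γ such that contraction Γ/e does not create a multiple edge between a pair of vertices. Then Γ/e is again a homotopy link diagram: it has no loops, and any path in Γ/e between distinct vertices on a common segment passes through a vertex on another segment. -/

import Mathlib

/-- A path between vertices `v` and `w` in a diagram with edge-endpoint map
`b : E → Sym2 V`: a nonempty sequence of edges whose first edge contains `v`, whose
last edge contains `w`, and in which consecutive edges share a vertex. -/
def IsPath {V E : Type} (b : E → Sym2 V) (v w : V) (es : List E) : Prop :=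
  (∃ e, es.head? = some e ∧ v ∈ b e) ∧ (∃ e, es.getLast? = some e ∧ w ∈ b e) ∧
    List.Chain' (fun e e' => ∃ u, u ∈ b e ∧ u ∈ b e') es

/-- The defining condition of homotopy link diagrams: every path between two distinct
segment vertices lying on the same segment passes through a vertex lying on a
different segment.  Here `segOf v = some i` means `v` is a segment vertex on the
`i`-th segment, and `segOf v = none` means `v` is a free vertex. -/
def HomotopyCond {V E : Type} (segOf : V → Option ℕ) (b : E → Sym2 V) : Prop :=
  ∀ v w : V, v ≠ w → ∀ i : ℕ, segOf v = some i → segOf w = some i →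
    ∀ es : List E, IsPath b v w es →
      ∃ e ∈ es, ∃ u ∈ b e, ∃ j : ℕ, segOf u = some j ∧ j ≠ i

section ContractionAux

variable {V E E' : Type} [DecidableEq V]

private lemma ctr_ne_ww {vv ww : V} (hvw : vv ≠ ww) (x : V) :
    (if x = ww then vv else x) ≠ ww := by
  split
  · exact hvw
  · assumption

private lemma ctr_eq_of_ne {ww : V} (vv : V) {x : V} (h : x ≠ ww) :
    (if x = ww then vv else x) = x := if_neg h

private lemma ctr_eq_ctr {vv ww : V} {x y : V}
    (h : (if x = ww then vv else x) = (if y = ww then vv else y)) :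
    x = y ∨ (x = vv ∧ y = ww) ∨ (x = ww ∧ y = vv) := by
  by_cases hx : x = ww <;> by_cases hy : y = ww <;>
    simp [hx, hy] at h ⊢ <;> tauto

/-- find the first element satisfying `p`, classically. -/
private lemma find_first {α : Type} (p : α → Prop) :
    ∀ l : List α, (∀ x ∈ l, ¬ p x) ∨
      ∃ l₁ x l₂, l = l₁ ++ x :: l₂ ∧ (∀ y ∈ l₁, ¬ p y) ∧ p x := by
  intro l
  induction l with
  | nil => left; simp
  | cons a t ih =>
    by_cases h : p a
    · right; exact ⟨[], a, t, rfl, by simp, h⟩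
    · rcases ih with h' | ⟨l₁, x, l₂, rfl, h1, h2⟩
      · left
        intro x hx
        rcases List.mem_cons.mp hx with rfl | hx
        · exact h
        · exact h' x hx
      · right
        refine ⟨a :: l₁, x, l₂, rfl, ?_, h2⟩
        intro y hy
        rcases List.mem_cons.mp hy with rfl | hy
        · exact h
        · exact h1 y hy

private lemma getLast?_cons_of_ne_nil {α : Type} (a : α) {l : List α} (h : l ≠ []) :
    (a :: l).getLast? = l.getLast? := by
  cases l with
  | nil => exact absurd rfl h
  | cons b t => simp [List.getLast?_cons_cons]

private lemma ne_nil_of_head?_eq_some {α : Type} {l : List α} {a : α}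
    (h : l.head? = some a) : l ≠ [] := by
  cases l with
  | nil => simp at h
  | cons b t => simp

/-- membership lifts along contraction when the vertex is not `vv`. -/
private lemma mem_lift {b : E → Sym2 V} {ι : E' → E} {vv ww v : V} (hv : v ≠ vv)
    {e' : E'} (h : v ∈ (b (ι e')).map (fun u => if u = ww then vv else u)) :
    v ∈ b (ι e') := by
  obtain ⟨x, hx, hfx⟩ := Sym2.mem_map.mp h
  by_cases hxw : x = ww
  · rw [hxw] at hfx; simp at hfx; exact absurd hfx.symm hv
  · rw [ctr_eq_of_ne vv hxw] at hfx; exact hfx ▸ hx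

private lemma ww_not_mem {b : E → Sym2 V} {ι : E' → E} {vv ww : V} (hvw : vv ≠ ww)
    {e' : E'} : ww ∉ (b (ι e')).map (fun u => if u = ww then vv else u) := by
  intro h
  obtain ⟨x, _, hfx⟩ := Sym2.mem_map.mp h
  exact ctr_ne_ww hvw x hfx

/-- lifting chains made of non-touching edges -/
private lemma chain_lift {b : E → Sym2 V} {ι : E' → E} {vv ww : V} :
    ∀ L : List E',
      (∀ e' ∈ L.dropLast, ¬ ∃ x ∈ b (ι e'), x = vv ∨ x = ww) →
      List.Chain' (fun e f => ∃ u, u ∈ (b (ι e)).map (fun u => if u = ww then vv else u)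
        ∧ u ∈ (b (ι f)).map (fun u => if u = ww then vv else u)) L →
      List.Chain' (fun e f => ∃ u, u ∈ b e ∧ u ∈ b f) (L.map ι) := by
  intro L
  induction L with
  | nil => intro _ _; exact List.isChain_nil
  | cons a t ih =>
    cases t with
    | nil => intro _ _; exact List.isChain_singleton _
    | cons c t' =>
      intro hnt hch
      replace hch := List.isChain_cons_cons.mp hch
      obtain ⟨⟨u, hua, huc⟩, hch'⟩ := hch
      have hant : ¬ ∃ x ∈ b (ι a), x = vv ∨ x = ww := by
        apply hnt a; simp [List.dropLast]
      obtain ⟨x, hx, hfx⟩ := Sym2.mem_map.mp hua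
      have hxw : ¬ (x = vv ∨ x = ww) := fun hc => hant ⟨x, hx, hc⟩
      rw [ctr_eq_of_ne vv (fun hc => hxw (Or.inr hc))] at hfx
      subst hfx
      obtain ⟨y, hy, hfy⟩ := Sym2.mem_map.mp huc
      have hyx : y = x := by
        by_cases hyw : y = ww
        · rw [hyw] at hfy; simp at hfy
          exact absurd (Or.inl hfy.symm) hxw
        · rwa [ctr_eq_of_ne vv hyw] at hfy
      rw [List.map_cons, List.map_cons]
      apply List.isChain_cons_cons.mpr
      constructor
      · exact ⟨x, hx, hyx ▸ hy⟩
      · rw [← List.map_cons]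
        apply ih
        · intro e' he'
          apply hnt
          cases t' with
          | nil => simp [List.dropLast] at he'
          | cons d t'' => simp [List.dropLast] at he' ⊢; tauto
        · exact hch'

end ContractionAux


section BP
variable {V E E' : Type} [DecidableEq V]

private lemma getLast?_cons_of_ne_nil' {α : Type} (a : α) {l : List α} (h : l ≠ []) :
    (a :: l).getLast? = l.getLast? := by
  cases l with
  | nil => exact absurd rfl h
  | cons b t => simp [List.getLast?_cons_cons]

/-- In the edge-contraction case, a path in the contracted diagram lifts to a path
in the original diagram, possibly inserting the contracted edge `e₀`. -/
private lemma buildPath {b : E → Sym2 V} {ι : E' → E} {vv ww : V} (hvw : vv ≠ ww)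
    {e₀ : E} (hb₀ : b e₀ = s(vv, ww)) :
    ∀ (es : List E') (e1 : E'), es.head? = some e1 →
      List.Chain' (fun e f => ∃ u, u ∈ (b (ι e)).map (fun u => if u = ww then vv else u)
        ∧ u ∈ (b (ι f)).map (fun u => if u = ww then vv else u)) es →
      ∀ (w : V) (eL : E'), es.getLast? = some eL →
        w ∈ (b (ι eL)).map (fun u => if u = ww then vv else u) →
        ∃ ES : List E, ES.head? = some (ι e1) ∧
          (∃ eE, ES.getLast? = some eE ∧ w ∈ b eE) ∧
          List.Chain' (fun e f => ∃ u, u ∈ b e ∧ u ∈ b f) ES ∧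
          ∀ e ∈ ES, (∃ e' ∈ es, e = ι e') ∨
            (e = e₀ ∧ ∃ e' ∈ es,
              vv ∈ (b (ι e')).map (fun u => if u = ww then vv else u)) := by
  intro es
  induction es with
  | nil => intro e1 h1; simp at h1
  | cons a t ih =>
    cases t with
    | nil =>
      intro e1 h1 _ w eL hL hw
      simp at h1 hL
      subst h1; subst hL
      obtain ⟨y, hy, hfy⟩ := Sym2.mem_map.mp hw
      by_cases hyw : y = ww
      · rw [hyw] at hfy
        simp at hfy
        refine ⟨[ι a, e₀], rfl, ⟨e₀, by simp, ?_⟩, ?_, ?_⟩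
        · rw [← hfy, hb₀]; exact Sym2.mem_mk_left vv ww
        · apply List.isChain_cons_cons.mpr
          exact ⟨⟨ww, hyw ▸ hy, by rw [hb₀]; exact Sym2.mem_mk_right vv ww⟩,
            List.isChain_singleton e₀⟩
        · intro e he
          rcases List.mem_cons.mp he with rfl | he
          · exact Or.inl ⟨a, by simp, rfl⟩
          · simp at he; subst he
            exact Or.inr ⟨rfl, a, by simp,
              Sym2.mem_map.mpr ⟨ww, hyw ▸ hy, by simp⟩⟩
      · rw [if_neg hyw] at hfy
        subst hfy
        refine ⟨[ι a], rfl, ⟨ι a, by simp, hy⟩, List.isChain_singleton _, ?_⟩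
        intro e he; simp at he; subst he
        exact Or.inl ⟨a, by simp, rfl⟩
    | cons c t' =>
      intro e1 h1 hch w eL hL hw
      simp at h1; subst h1
      replace hch := List.isChain_cons_cons.mp hch
      obtain ⟨⟨u, hua, huc⟩, hch'⟩ := hch
      rw [List.getLast?_cons_cons] at hL
      obtain ⟨ES₂, hh₂, hlast₂, hch₂, hmem₂⟩ := ih c rfl hch' w eL hL hw
      have hne₂ : ES₂ ≠ [] := by
        cases ES₂ with
        | nil => simp at hh₂
        | cons _ _ => simp
      obtain ⟨x, hx, hfx⟩ := Sym2.mem_map.mp hua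
      obtain ⟨y, hy, hfy⟩ := Sym2.mem_map.mp huc
      have hmem₂' : ∀ e ∈ ES₂, (∃ e' ∈ a :: c :: t', e = ι e') ∨
          (e = e₀ ∧ ∃ e' ∈ a :: c :: t',
            vv ∈ (b (ι e')).map (fun u => if u = ww then vv else u)) := by
        intro e he
        rcases hmem₂ e he with ⟨e', he', hee⟩ | ⟨he0, e', he', hvve⟩
        · exact Or.inl ⟨e', List.mem_cons_of_mem _ he', hee⟩
        · exact Or.inr ⟨he0, e', List.mem_cons_of_mem _ he', hvve⟩
      have hfxy : (if x = ww then vv else x) = (if y = ww then vv else y) := by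
        rw [hfx, hfy]
      by_cases hxy : x = y
      · subst hxy
        refine ⟨ι a :: ES₂, rfl, ?_, ?_, ?_⟩
        · obtain ⟨eE, hE1, hE2⟩ := hlast₂
          exact ⟨eE, by rw [getLast?_cons_of_ne_nil' _ hne₂]; exact hE1, hE2⟩
        · refine hch₂.cons ?_
          intro z hz
          rw [hh₂] at hz; simp at hz; subst hz
          exact ⟨x, hx, hy⟩
        · intro e he
          rcases List.mem_cons.mp he with rfl | he
          · exact Or.inl ⟨a, by simp, rfl⟩
          · exact hmem₂' e he
      · -- x ≠ y, so {x, y} = {vv, ww}: insert e₀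
        have hcases : (x = vv ∧ y = ww) ∨ (x = ww ∧ y = vv) := by
          by_cases hxw : x = ww
          · by_cases hyw : y = ww
            · exact absurd (hxw.trans hyw.symm) hxy
            · rw [if_pos hxw, if_neg hyw] at hfxy
              exact Or.inr ⟨hxw, hfxy.symm⟩
          · by_cases hyw : y = ww
            · rw [if_neg hxw, if_pos hyw] at hfxy
              exact Or.inl ⟨hfxy, hyw⟩
            · rw [if_neg hxw, if_neg hyw] at hfxy
              exact absurd hfxy hxy
        have hxmem : x ∈ b e₀ := by
          rw [hb₀]; rcases hcases with ⟨h1, _⟩ | ⟨h1, _⟩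
          · rw [h1]; exact Sym2.mem_mk_left vv ww
          · rw [h1]; exact Sym2.mem_mk_right vv ww
        have hymem : y ∈ b e₀ := by
          rw [hb₀]; rcases hcases with ⟨_, h2⟩ | ⟨_, h2⟩
          · rw [h2]; exact Sym2.mem_mk_right vv ww
          · rw [h2]; exact Sym2.mem_mk_left vv ww
        refine ⟨ι a :: e₀ :: ES₂, rfl, ?_, ?_, ?_⟩
        · obtain ⟨eE, hE1, hE2⟩ := hlast₂
          refine ⟨eE, ?_, hE2⟩
          rw [List.getLast?_cons_cons, getLast?_cons_of_ne_nil' _ hne₂]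
          exact hE1
        · apply List.isChain_cons_cons.mpr
          refine ⟨⟨x, hx, hxmem⟩, hch₂.cons ?_⟩
          intro z hz
          rw [hh₂] at hz; simp at hz; subst hz
          exact ⟨y, hymem, hy⟩
        · intro e he
          rcases List.mem_cons.mp he with rfl | he
          · exact Or.inl ⟨a, by simp, rfl⟩
          rcases List.mem_cons.mp he with rfl | he
          · refine Or.inr ⟨rfl, a, by simp, Sym2.mem_map.mpr ⟨x, hx, ?_⟩⟩
            rcases hcases with ⟨h1, _⟩ | ⟨h1, _⟩
            · rw [h1]; simp [hvw.symm]
            · rw [h1]; simp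
          · exact hmem₂' e he

end BP

section H
variable {V E E' : Type} [DecidableEq V]

private lemma helper (b : E → Sym2 V) (segOf : V → Option ℕ)
    (vv ww : V) (hvw : vv ≠ ww) (ι : E' → E)
    (hpath : HomotopyCond segOf b)
    (hcase : (∃ e₀ : E, b e₀ = s(vv, ww) ∧ segOf ww = none) ∨
             (∃ k : ℕ, segOf vv = some k ∧ segOf ww = some k))
    (v w : V) (hne : v ≠ w) (hv : v ≠ vv) (i : ℕ)
    (hvI : segOf v = some i) (hwI : segOf w = some i)
    (es : List E')
    (hp : IsPath (fun e' : E' => (b (ι e')).map (fun u => if u = ww then vv else u)) v w es) :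
    ∃ e ∈ es, ∃ u ∈ (b (ι e)).map (fun u => if u = ww then vv else u),
      ∃ j : ℕ, segOf u = some j ∧ j ≠ i := by
  obtain ⟨⟨eh, hh, hvh⟩, ⟨el, hl, hwl⟩, hchain⟩ := hp
  by_cases htouch : ∃ e' ∈ es, ∃ x ∈ b (ι e'), x = vv ∨ x = ww
  · -- some edge of the path touches {vv, ww}
    obtain ⟨et, hetes, hxt⟩ := htouch
    rcases hcase with ⟨e₀, hb₀, hwwnone⟩ | ⟨k, hvvk, hwwk⟩
    · -- edge-contraction case: build a path in Γ inserting e₀ where needed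
      obtain ⟨ES, hESh, ⟨eE, hESl, hwE⟩, hESch, hESmem⟩ :=
        buildPath hvw hb₀ es eh hh hchain w el hl hwl
      have hvh' : v ∈ b (ι eh) := mem_lift hv hvh
      obtain ⟨e, heES, u, hu, j, hj, hji⟩ :=
        hpath v w hne i hvI hwI ES ⟨⟨ι eh, hESh, hvh'⟩, ⟨eE, hESl, hwE⟩, hESch⟩
      have hune : u ≠ ww := by
        intro h; rw [h, hwwnone] at hj; simp at hj
      rcases hESmem e heES with ⟨e', he', rfl⟩ | ⟨rfl, e', he', hvv'⟩
      · exact ⟨e', he', u, Sym2.mem_map.mpr ⟨u, hu, ctr_eq_of_ne vv hune⟩, j, hj, hji⟩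
      · have huv : u = vv := by
          rw [hb₀] at hu
          exact (Sym2.mem_iff.mp hu).resolve_right hune
        exact ⟨e', he', vv, hvv', j, huv ▸ hj, hji⟩
    · -- arc-contraction case
      by_cases hk : k = i
      · -- vv, ww lie on segment i: use the prefix up to the first touching edge
        rcases find_first (fun e' => ∃ x ∈ b (ι e'), x = vv ∨ x = ww) es with
          hno | ⟨l₁, e₁, l₂, heq, hl₁, ht₁⟩
        · exact absurd hxt (hno et hetes)
        · obtain ⟨x₁, hx₁, hx₁c⟩ := ht₁
          have hx₁i : segOf x₁ = some i := by
            rcases hx₁c with h | h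
            · rw [h, hvvk, hk]
            · rw [h, hwwk, hk]
          have hvx₁ : v ≠ x₁ := by
            rcases hx₁c with h | h
            · rw [h]; exact hv
            · rw [h]; intro hc
              exact ww_not_mem hvw (hc ▸ hvh)
          -- the prefix chains in Γ
          have heq' : es = (l₁ ++ [e₁]) ++ l₂ := by simp [heq]
          have hchP : List.Chain' (fun e f =>
              ∃ u, u ∈ (b (ι e)).map (fun u => if u = ww then vv else u)
                ∧ u ∈ (b (ι f)).map (fun u => if u = ww then vv else u)) (l₁ ++ [e₁]) :=
            (heq' ▸ hchain).left_of_append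
          have hchPl := chain_lift (l₁ ++ [e₁])
            (by intro e' he'; rw [List.dropLast_concat] at he'; exact hl₁ e' he') hchP
          have hheadeq : (l₁ ++ [e₁]).head? = some eh := by
            cases l₁ with
            | nil =>
              rw [heq] at hh; simp at hh ⊢; exact hh
            | cons a t =>
              rw [heq] at hh; simp at hh ⊢; exact hh
          have hvh' : v ∈ b (ι eh) := mem_lift hv hvh
          have hip : IsPath b v x₁ ((l₁ ++ [e₁]).map ι) := by
            refine ⟨⟨ι eh, ?_, hvh'⟩, ⟨ι e₁, ?_, hx₁⟩, hchPl⟩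
            · rw [List.head?_map, hheadeq]; rfl
            · rw [List.map_append]; simp [List.getLast?_concat]
          obtain ⟨e, he, u, hu, j, hj, hji⟩ := hpath v x₁ hvx₁ i hvI hx₁i _ hip
          obtain ⟨e', he'P, rfl⟩ := List.mem_map.mp he
          have he'es : e' ∈ es := by
            rw [heq']; exact List.mem_append_left _ he'P
          by_cases huw : u = ww
          · rw [huw, hwwk] at hj
            exact absurd (hk ▸ (Option.some.inj hj) ▸ rfl : j = i) hji
          · exact ⟨e', he'es, u,
              Sym2.mem_map.mpr ⟨u, hu, ctr_eq_of_ne vv huw⟩, j, hj, hji⟩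
      · -- vv, ww lie on a different segment k ≠ i: vv itself is a witness
        obtain ⟨x, hx, hxc⟩ := hxt
        have : vv ∈ (b (ι et)).map (fun u => if u = ww then vv else u) := by
          refine Sym2.mem_map.mpr ⟨x, hx, ?_⟩
          rcases hxc with h | h
          · rw [h]; split <;> rfl
          · rw [h]; simp
        exact ⟨et, hetes, vv, this, k, hvvk, hk⟩
  · -- no edge touches {vv, ww}: the path lifts verbatim
    push_neg at htouch
    have hnt : ∀ e' ∈ es, ¬ ∃ x ∈ b (ι e'), x = vv ∨ x = ww := by
      intro e' he' ⟨x, hx, hc⟩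
      rcases hc with h | h
      · exact (htouch e' he' x hx).1 h
      · exact (htouch e' he' x hx).2 h
    have hchl := chain_lift es
      (fun e' he' => hnt e' (List.dropLast_subset es he')) hchain
    have hehm : eh ∈ es := List.mem_of_mem_head? (hh ▸ rfl : eh ∈ es.head?)
    have helm : el ∈ es := List.mem_of_mem_getLast? (hl ▸ rfl : el ∈ es.getLast?)
    have hvh' : v ∈ b (ι eh) := by
      obtain ⟨x, hx, hfx⟩ := Sym2.mem_map.mp hvh
      have hxnw : x ≠ ww := fun hc => (htouch eh hehm x hx).2 hc
      rwa [← hfx, ctr_eq_of_ne vv hxnw]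
    have hwl' : w ∈ b (ι el) := by
      obtain ⟨y, hy, hfy⟩ := Sym2.mem_map.mp hwl
      have hynw : y ≠ ww := fun hc => (htouch el helm y hy).2 hc
      rwa [← hfy, ctr_eq_of_ne vv hynw]
    have hip : IsPath b v w (es.map ι) := by
      refine ⟨⟨ι eh, ?_, hvh'⟩, ⟨ι el, ?_, hwl'⟩, hchl⟩
      · rw [List.head?_map, hh]; rfl
      · rw [List.getLast?_map, hl]; rfl
    obtain ⟨e, he, u, hu, j, hj, hji⟩ := hpath v w hne i hvI hwI _ hip
    obtain ⟨e', he'es, rfl⟩ := List.mem_map.mp he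
    have hunw : u ≠ ww := fun hc => (htouch e' he'es u hu).2 hc
    exact ⟨e', he'es, u, Sym2.mem_map.mpr ⟨u, hu, ctr_eq_of_ne vv hunw⟩, j, hj, hji⟩


end H

/-- Contracting a mixed edge, a free edge, or an arc of a homotopy link diagram,
provided no multiple edge is created, again yields a homotopy link diagram: the
contraction has no loops and satisfies the homotopy path condition.  The vertex `ww`
is identified with the vertex `vv`; `ι : E' → E` is the inclusion of the edges of
the contracted diagram (omitting the contracted edge `e₀` in the edge case; an arc
is not an edge, so in the arc case `ι` is onto). -/
theorem contraction_of_homotopyLinkDiagram {V E E' : Type} [DecidableEq V]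
    (b : E → Sym2 V) (segOf : V → Option ℕ) (vv ww : V) (hvw : vv ≠ ww)
    (ι : E' → E) (hι : Function.Injective ι)
    (hnoloop : ∀ e : E, ¬ (b e).IsDiag)
    (hpath : HomotopyCond segOf b)
    (hcase :
      -- a mixed or free edge `e₀` joining `vv` to the free vertex `ww` is contracted
      (∃ e₀ : E, b e₀ = s(vv, ww) ∧ segOf ww = none ∧ (∀ e' : E', ι e' ≠ e₀) ∧
        ∀ e : E, e ≠ e₀ → ∃ e', ι e' = e) ∨
      -- or an arc between the segment vertices `vv`, `ww` on a common segment is contracted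
      (∃ i : ℕ, segOf vv = some i ∧ segOf ww = some i ∧ Function.Surjective ι))
    -- the contraction creates no multiple edge between any pair of vertices
    (hnomult : Function.Injective fun e : E =>
      (b e).map (fun u => if u = ww then vv else u)) :
    (∀ e' : E', ¬ ((b (ι e')).map (fun u => if u = ww then vv else u)).IsDiag) ∧
      HomotopyCond segOf
        (fun e' : E' => (b (ι e')).map (fun u => if u = ww then vv else u)) := by
  constructor
  · -- no loops in the contraction
    intro e' hdiag
    generalize hbe : b (ι e') = s at hdiag
    induction s using Sym2.ind with
    | _ x y =>
    rw [Sym2.map_pair_eq, Sym2.mk_isDiag_iff] at hdiag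
    have hxyne : x ≠ y := by
      intro h
      exact hnoloop (ι e') (by rw [hbe]; exact Sym2.mk_isDiag_iff.mpr h)
    have hbvw : b (ι e') = s(vv, ww) := by
      rcases ctr_eq_ctr hdiag with h | ⟨h1, h2⟩ | ⟨h1, h2⟩
      · exact absurd h hxyne
      · rw [hbe, h1, h2]
      · rw [hbe, h1, h2, Sym2.eq_swap]
    rcases hcase with ⟨e₀, hb₀, _, hmiss, _⟩ | ⟨k, hvvk, hwwk, _⟩
    · -- edge case: contradicts the no-multiple-edge hypothesis
      have : (fun e : E => (b e).map (fun u => if u = ww then vv else u)) (ι e') =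
          (fun e : E => (b e).map (fun u => if u = ww then vv else u)) e₀ := by
        simp only [hbvw, hb₀]
      exact hmiss e' (hnomult this)
    · -- arc case: the single-edge path from vv to ww violates the homotopy condition
      have hip : IsPath b vv ww [ι e'] := by
        refine ⟨⟨ι e', rfl, ?_⟩, ⟨ι e', rfl, ?_⟩, List.isChain_singleton _⟩
        · rw [hbvw]; exact Sym2.mem_mk_left vv ww
        · rw [hbvw]; exact Sym2.mem_mk_right vv ww
      obtain ⟨e, he, u, hu, j, hj, hji⟩ := hpath vv ww hvw k hvvk hwwk [ι e'] hip
      have he' : e = ι e' := by simpa using he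
      rw [he', hbvw] at hu
      rcases Sym2.mem_iff.mp hu with rfl | rfl
      · rw [hvvk] at hj
        exact hji (Option.some.inj hj).symm
      · rw [hwwk] at hj
        exact hji (Option.some.inj hj).symm
  · -- the homotopy path condition
    intro v w hne i hvI hwI es hp
    have hcase' : (∃ e₀ : E, b e₀ = s(vv, ww) ∧ segOf ww = none) ∨
        (∃ k : ℕ, segOf vv = some k ∧ segOf ww = some k) := by
      rcases hcase with ⟨e₀, h1, h2, _, _⟩ | ⟨k, h1, h2, _⟩
      · exact Or.inl ⟨e₀, h1, h2⟩
      · exact Or.inr ⟨k, h1, h2⟩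
    by_cases hv : v = vv
    · -- reverse the path and argue from `w`, which is then distinct from `vv`
      have hwvv : w ≠ vv := fun h => hne (hv.trans h.symm)
      have hp' : IsPath (fun e' : E' => (b (ι e')).map (fun u => if u = ww then vv else u))
          w v es.reverse := by
        obtain ⟨⟨eh, hh, hvh⟩, ⟨el, hl, hwl⟩, hch⟩ := hp
        refine ⟨⟨el, ?_, hwl⟩, ⟨eh, ?_, hvh⟩, ?_⟩
        · rw [List.head?_reverse]; exact hl
        · rw [List.getLast?_reverse]; exact hh
        · exact List.isChain_reverse.mpr
            (hch.imp fun a b ⟨u, h1, h2⟩ => ⟨u, h2, h1⟩)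
      obtain ⟨e, he, rest⟩ := helper b segOf vv ww hvw ι hpath hcase' w v hne.symm hwvv i
        hwI hvI es.reverse hp'
      exact ⟨e, List.mem_reverse.mp he, rest⟩
    · exact helper b segOf vv ww hvw ι hpath hcase' v w hne hv i hvI hwI es hp
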